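/- Fix real numbers ℓ > 0 and q ∈ (0,1], and let f and g be two q-regular densities on [0,ℓ]. Then there exists a homeomorphism ψ of [0,ℓ] onto itself such that the pushforward under ψ of the measure with density f with respect to Lebesgue measure restricted to [0,ℓ] equals the measure with density g with respect to Lebesgue measure restricted to [0,ℓ], and |ψ(t) − t| ≤ 2·(1−q)·ℓ/q for every t ∈ [0,ℓ]. -/

import Mathlib

open MeasureTheory

/-- `f` is a `q`-regular density on `[0,ℓ]`: it is continuous, has total integral one
over `[0,ℓ]`, and `q·(b−a)/ℓ ≤ ∫_a^b f ≤ (b−a)/(q·ℓ)` for all `0 ≤ a ≤ b ≤ ℓ`. -/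
def IsRegularDensity (ℓ q : ℝ) (f : ℝ → ℝ) : Prop :=
  Continuous f ∧ (∫ s in (0:ℝ)..ℓ, f s) = 1 ∧
    ∀ a b : ℝ, 0 ≤ a → a ≤ b → b ≤ ℓ →
      q * (b - a) / ℓ ≤ (∫ s in a..b, f s) ∧ (∫ s in a..b, f s) ≤ (b - a) / (q * ℓ)


lemma regDensity_nonneg {ℓ q : ℝ} (hℓ : 0 < ℓ) (hq0 : 0 < q) {f : ℝ → ℝ}
    (hf : IsRegularDensity ℓ q f) : ∀ t ∈ Set.Icc (0:ℝ) ℓ, 0 ≤ f t := by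
  obtain ⟨hc, -, hbound⟩ := hf
  intro t ht
  by_contra hneg
  push_neg at hneg
  have hev : ∀ᶠ s in nhds t, f s < 0 := (hc.tendsto t).eventually_lt_const hneg
  obtain ⟨δ, hδpos, hδ⟩ := Metric.eventually_nhds_iff.mp hev
  set a := max 0 (t - δ/2) with ha
  set b := min ℓ (t + δ/2) with hb
  have ha0 : 0 ≤ a := le_max_left _ _
  have hat : a ≤ t := max_le ht.1 (by linarith)
  have hab : a < b := by
    apply lt_min
    · exact max_lt hℓ (by have := ht.2; linarith)
    · exact max_lt (by have := ht.1; linarith) (by linarith)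
  have hbℓ : b ≤ ℓ := min_le_left _ _
  have hbt : b ≤ t + δ/2 := min_le_right _ _
  have hkey := (hbound a b ha0 hab.le hbℓ).1
  have hpos : 0 < ∫ s in a..b, -f s := by
    apply intervalIntegral.intervalIntegral_pos_of_pos_on (hc.neg.intervalIntegrable a b) _ hab
    intro x hx
    have : dist x t < δ := by
      rw [Real.dist_eq, abs_sub_lt_iff]
      have h1 : a ≤ x := hx.1.le
      have h2 : x ≤ b := hx.2.le
      have h3 : t - δ/2 ≤ a := le_max_right _ _
      constructor <;> linarith
    linarith [hδ this, Pi.neg_apply f x]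
  rw [intervalIntegral.integral_neg] at hpos
  have : 0 ≤ q * (b - a) / ℓ := div_nonneg (mul_nonneg hq0.le (by linarith)) hℓ.le
  linarith

lemma regDensity_primitive_sub {f : ℝ → ℝ} (hc : Continuous f) (a b : ℝ) :
    (∫ s in (0:ℝ)..b, f s) - (∫ s in (0:ℝ)..a, f s) = ∫ s in a..b, f s := by
  have := intervalIntegral.integral_add_adjacent_intervals
    ((hc.intervalIntegrable 0 a : IntervalIntegrable f volume 0 a)) (hc.intervalIntegrable a b)
  linarith

lemma regDensity_strictMonoOn {ℓ q : ℝ} (hℓ : 0 < ℓ) (hq0 : 0 < q) {f : ℝ → ℝ}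
    (hf : IsRegularDensity ℓ q f) :
    StrictMonoOn (fun t => ∫ s in (0:ℝ)..t, f s) (Set.Icc 0 ℓ) := by
  intro a ha b hb hab
  have hkey := (hf.2.2 a b ha.1 hab.le hb.2).1
  have hsub := regDensity_primitive_sub hf.1 a b
  have : 0 < q * (b - a) / ℓ := by
    apply div_pos (mul_pos hq0 (by linarith)) hℓ
  simp only []
  linarith

lemma regDensity_primitive_mapsTo {ℓ q : ℝ} (hℓ : 0 < ℓ) (hq0 : 0 < q) {f : ℝ → ℝ}
    (hf : IsRegularDensity ℓ q f) {t : ℝ} (ht : t ∈ Set.Icc 0 ℓ) :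
    q * t / ℓ ≤ (∫ s in (0:ℝ)..t, f s) ∧
      (∫ s in (0:ℝ)..t, f s) ≤ 1 - q * (ℓ - t) / ℓ := by
  have h1 := (hf.2.2 0 t le_rfl ht.1 ht.2).1
  have h2 := (hf.2.2 t ℓ ht.1 ht.2 le_rfl).1
  have hsub := regDensity_primitive_sub hf.1 t ℓ
  rw [hf.2.1] at hsub
  have h0 : (∫ s in (0:ℝ)..(0:ℝ), f s) = 0 := intervalIntegral.integral_same
  constructor
  · have : q * (t - 0) / ℓ = q * t / ℓ := by ring_nf
    linarith [h1]
  · linarith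

set_option maxHeartbeats 1000000 in
lemma regDensity_measure_Icc {ℓ q : ℝ} (hℓ : 0 < ℓ) (hq0 : 0 < q) {f : ℝ → ℝ}
    (hf : IsRegularDensity ℓ q f) {c : ℝ} (hc0 : 0 ≤ c) (hcℓ : c ≤ ℓ) :
    ((volume.restrict (Set.Icc 0 ℓ)).withDensity (fun t => ENNReal.ofReal (f t)))
      (Set.Icc 0 c) = ENNReal.ofReal (∫ s in (0:ℝ)..c, f s) := by
  rw [withDensity_apply _ measurableSet_Icc,
    Measure.restrict_restrict measurableSet_Icc,
    Set.inter_eq_left.mpr (Set.Icc_subset_Icc le_rfl hcℓ)]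
  have hint : Integrable f (volume.restrict (Set.Icc 0 c)) :=
    by exact hf.1.integrableOn_Icc
  have hnn : 0 ≤ᵐ[volume.restrict (Set.Icc 0 c)] f := by
    filter_upwards [ae_restrict_mem measurableSet_Icc] with x hx
    exact regDensity_nonneg hℓ hq0 hf x ⟨hx.1, hx.2.trans hcℓ⟩
  rw [← ofReal_integral_eq_lintegral_ofReal hint hnn]
  congr 1
  rw [intervalIntegral.integral_of_le hc0]
  exact MeasureTheory.integral_Icc_eq_integral_Ioc

/-- One-dimensional transport statement underlying Proposition 'matching': two
`q`-regular densities on `[0,ℓ]` are matched by a homeomorphism of `[0,ℓ]` moving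
every point a distance at most `2·(1−q)·ℓ/q`. -/
theorem regularDensity_matching
    (ℓ q : ℝ) (hℓ : 0 < ℓ) (hq : q ∈ Set.Ioc (0:ℝ) 1)
    (f g : ℝ → ℝ) (hf : IsRegularDensity ℓ q f) (hg : IsRegularDensity ℓ q g) :
    ∃ ψ : ℝ → ℝ,
      Set.BijOn ψ (Set.Icc 0 ℓ) (Set.Icc 0 ℓ) ∧
      ContinuousOn ψ (Set.Icc 0 ℓ) ∧
      Measure.map ψ ((volume.restrict (Set.Icc 0 ℓ)).withDensity
          (fun t => ENNReal.ofReal (f t))) =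
        (volume.restrict (Set.Icc 0 ℓ)).withDensity (fun t => ENNReal.ofReal (g t)) ∧
      ∀ t ∈ Set.Icc (0:ℝ) ℓ, |ψ t - t| ≤ 2 * (1 - q) * ℓ / q := by
  obtain ⟨hq0, hq1⟩ := hq
  have hfc := hf.1
  have hgc := hg.1
  set F : ℝ → ℝ := fun t => ∫ s in (0:ℝ)..t, f s with hFdef
  set G : ℝ → ℝ := fun t => ∫ s in (0:ℝ)..t, g s with hGdef
  have hFcont : Continuous F :=
    intervalIntegral.continuous_primitive (fun a b => hfc.intervalIntegrable a b) 0
  have hGcont : Continuous G :=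
    intervalIntegral.continuous_primitive (fun a b => hgc.intervalIntegrable a b) 0
  have hFmono : StrictMonoOn F (Set.Icc 0 ℓ) := regDensity_strictMonoOn hℓ hq0 hf
  have hGmono : StrictMonoOn G (Set.Icc 0 ℓ) := regDensity_strictMonoOn hℓ hq0 hg
  have hF0 : F 0 = 0 := intervalIntegral.integral_same
  have hFℓ : F ℓ = 1 := hf.2.1
  have hG0 : G 0 = 0 := intervalIntegral.integral_same
  have hGℓ : G ℓ = 1 := hg.2.1
  have hFmem : ∀ t ∈ Set.Icc (0:ℝ) ℓ, F t ∈ Set.Icc (0:ℝ) 1 := by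
    intro t ht
    obtain ⟨h1, h2⟩ := regDensity_primitive_mapsTo hℓ hq0 hf ht
    have e1 : 0 ≤ q * t / ℓ := div_nonneg (mul_nonneg hq0.le ht.1) hℓ.le
    have e2 : 0 ≤ q * (ℓ - t) / ℓ :=
      div_nonneg (mul_nonneg hq0.le (by linarith [ht.2])) hℓ.le
    exact ⟨by linarith, by linarith⟩
  have hGmem : ∀ t ∈ Set.Icc (0:ℝ) ℓ, G t ∈ Set.Icc (0:ℝ) 1 := by
    intro t ht
    obtain ⟨h1, h2⟩ := regDensity_primitive_mapsTo hℓ hq0 hg ht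
    have e1 : 0 ≤ q * t / ℓ := div_nonneg (mul_nonneg hq0.le ht.1) hℓ.le
    have e2 : 0 ≤ q * (ℓ - t) / ℓ :=
      div_nonneg (mul_nonneg hq0.le (by linarith [ht.2])) hℓ.le
    exact ⟨by linarith, by linarith⟩
  have hFsurj : Set.Icc (0:ℝ) 1 ⊆ F '' Set.Icc 0 ℓ := by
    have h := intermediate_value_Icc hℓ.le hFcont.continuousOn
    rwa [hF0, hFℓ] at h
  have hGsurj : Set.Icc (0:ℝ) 1 ⊆ G '' Set.Icc 0 ℓ := by
    have h := intermediate_value_Icc hℓ.le hGcont.continuousOn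
    rwa [hG0, hGℓ] at h
  -- build the inverse of G via a compact-to-T2 homeomorphism
  have hGbij : Function.Bijective
      (fun x : Set.Icc (0:ℝ) ℓ => (⟨G x, hGmem x x.2⟩ : Set.Icc (0:ℝ) 1)) := by
    constructor
    · intro x y hxy
      exact Subtype.ext (hGmono.injOn x.2 y.2 (congrArg Subtype.val hxy))
    · intro y
      obtain ⟨t, ht, hFt⟩ := hGsurj y.2
      exact ⟨⟨t, ht⟩, Subtype.ext hFt⟩
  let e := Equiv.ofBijective _ hGbij
  have hecont : Continuous e :=
    Continuous.subtype_mk (hGcont.comp continuous_subtype_val) _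
  haveI : CompactSpace (Set.Icc (0:ℝ) ℓ) := isCompact_iff_compactSpace.mp isCompact_Icc
  let h : Set.Icc (0:ℝ) ℓ ≃ₜ Set.Icc (0:ℝ) 1 :=
    Continuous.homeoOfEquivCompactToT2 (f := e) hecont
  have hkey : ∀ y : Set.Icc (0:ℝ) 1, G ((h.symm y : ℝ)) = y := by
    intro y
    exact congrArg Subtype.val (e.apply_symm_apply y)
  set ψ : ℝ → ℝ := fun t =>
    ((h.symm ⟨F ((Set.projIcc 0 ℓ hℓ.le t : Set.Icc (0:ℝ) ℓ) : ℝ),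
        hFmem _ (Set.projIcc 0 ℓ hℓ.le t).2⟩ : Set.Icc (0:ℝ) ℓ) : ℝ) with hψdef
  have hψcont : Continuous ψ := by
    apply continuous_subtype_val.comp
    apply h.symm.continuous.comp
    exact Continuous.subtype_mk
      (hFcont.comp (continuous_subtype_val.comp continuous_projIcc)) _
  have hproj : ∀ t ∈ Set.Icc (0:ℝ) ℓ,
      ((Set.projIcc 0 ℓ hℓ.le t : Set.Icc (0:ℝ) ℓ) : ℝ) = t :=
    fun t ht => congrArg Subtype.val (Set.projIcc_of_mem hℓ.le ht)
  have hψ_mem : ∀ t ∈ Set.Icc (0:ℝ) ℓ, ψ t ∈ Set.Icc 0 ℓ := fun t _ => (h.symm _).2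
  have hψ_eq : ∀ t ∈ Set.Icc (0:ℝ) ℓ, G (ψ t) = F t := by
    intro t ht
    have hk := hkey ⟨F ((Set.projIcc 0 ℓ hℓ.le t : Set.Icc (0:ℝ) ℓ) : ℝ),
      hFmem _ (Set.projIcc 0 ℓ hℓ.le t).2⟩
    rw [hψdef]
    simpa [hproj t ht] using hk
  -- bijectivity
  have hbij : Set.BijOn ψ (Set.Icc 0 ℓ) (Set.Icc 0 ℓ) := by
    refine ⟨fun t ht => hψ_mem t ht, ?_, ?_⟩
    · intro t1 h1 t2 h2 heq
      apply hFmono.injOn h1 h2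
      rw [← hψ_eq t1 h1, ← hψ_eq t2 h2, heq]
    · intro x hx
      obtain ⟨t, ht, hFt⟩ := hFsurj (hGmem x hx)
      refine ⟨t, ht, ?_⟩
      apply hGmono.injOn (hψ_mem t ht) hx
      rw [hψ_eq t ht, hFt]
  -- distance bound
  have hdist : ∀ t ∈ Set.Icc (0:ℝ) ℓ, |ψ t - t| ≤ 2 * (1 - q) * ℓ / q := by
    intro t ht
    have hpmem := hψ_mem t ht
    have hGψ := hψ_eq t ht
    have hFG : |F t - G t| ≤ 1 - q := by
      obtain ⟨hf1, hf2⟩ := regDensity_primitive_mapsTo hℓ hq0 hf ht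
      obtain ⟨hg1, hg2⟩ := regDensity_primitive_mapsTo hℓ hq0 hg ht
      have e1 : q * t / ℓ + q * (ℓ - t) / ℓ = q := by field_simp; ring
      rw [abs_le]
      constructor <;> [skip; skip] <;> linarith
    have habs : q * |ψ t - t| / ℓ ≤ 1 - q := by
      rcases le_total t (ψ t) with hle | hle
      · have h1 := (hg.2.2 t (ψ t) ht.1 hle hpmem.2).1
        have hsub' := regDensity_primitive_sub hgc t (ψ t)
        rw [abs_of_nonneg (by linarith)]
        have : F t - G t ≤ |F t - G t| := le_abs_self _
        have hGd : q * (ψ t - t) / ℓ ≤ G (ψ t) - G t := by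
          rw [hGdef]; simpa using hsub' ▸ h1
        rw [hGψ] at hGd
        linarith
      · have h1 := (hg.2.2 (ψ t) t hpmem.1 hle ht.2).1
        have hsub' := regDensity_primitive_sub hgc (ψ t) t
        rw [abs_of_nonpos (by linarith), show q * -(ψ t - t) / ℓ = q * (t - ψ t) / ℓ by ring]
        have : G t - F t ≤ |F t - G t| := by
          rw [abs_sub_comm]; exact le_abs_self _
        have hGd : q * (t - ψ t) / ℓ ≤ G t - G (ψ t) := by
          rw [hGdef]; simpa using hsub' ▸ h1
        rw [hGψ] at hGd
        linarith
    have h2 : q * |ψ t - t| ≤ (1 - q) * ℓ := (div_le_iff₀ hℓ).mp habs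
    rw [le_div_iff₀ hq0]
    have h3 : 0 ≤ (1 - q) * ℓ := mul_nonneg (by linarith) hℓ.le
    nlinarith [abs_nonneg (ψ t - t)]
  -- measure computation
  have hmeas : Measurable ψ := hψcont.measurable
  set μf := (volume.restrict (Set.Icc (0:ℝ) ℓ)).withDensity (fun t => ENNReal.ofReal (f t))
    with hμf
  set μg := (volume.restrict (Set.Icc (0:ℝ) ℓ)).withDensity (fun t => ENNReal.ofReal (g t))
    with hμg
  have hμf_Icc : ∀ {c : ℝ}, 0 ≤ c → c ≤ ℓ → μf (Set.Icc 0 c) = ENNReal.ofReal (F c) :=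
    fun hc0 hcℓ => regDensity_measure_Icc hℓ hq0 hf hc0 hcℓ
  have hμg_Icc : ∀ {c : ℝ}, 0 ≤ c → c ≤ ℓ → μg (Set.Icc 0 c) = ENNReal.ofReal (G c) :=
    fun hc0 hcℓ => regDensity_measure_Icc hℓ hq0 hg hc0 hcℓ
  have hrestr : ∀ (A : Set ℝ), MeasurableSet A → μf A =
      ((volume.restrict (Set.Icc (0:ℝ) ℓ)).withDensity
        (fun t => ENNReal.ofReal (f t))) (A ∩ Set.Icc 0 ℓ) := by
    intro A hA
    rw [hμf, withDensity_apply _ hA, withDensity_apply _ (hA.inter measurableSet_Icc),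
      Measure.restrict_restrict hA, Measure.restrict_restrict (hA.inter measurableSet_Icc),
      Set.inter_assoc, Set.inter_self]
  have hrestrg : ∀ (A : Set ℝ), MeasurableSet A → μg A =
      ((volume.restrict (Set.Icc (0:ℝ) ℓ)).withDensity
        (fun t => ENNReal.ofReal (g t))) (A ∩ Set.Icc 0 ℓ) := by
    intro A hA
    rw [hμg, withDensity_apply _ hA, withDensity_apply _ (hA.inter measurableSet_Icc),
      Measure.restrict_restrict hA, Measure.restrict_restrict (hA.inter measurableSet_Icc),
      Set.inter_assoc, Set.inter_self]
  haveI : IsFiniteMeasure μf := by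
    constructor
    have huniv : μf Set.univ = μf (Set.Icc 0 ℓ) := by
      rw [hrestr Set.univ MeasurableSet.univ, Set.univ_inter, ← hμf]
    rw [huniv, hμf_Icc hℓ.le le_rfl]
    exact ENNReal.ofReal_lt_top
  haveI : IsFiniteMeasure (μf.map ψ) := by
    constructor
    rw [Measure.map_apply hmeas MeasurableSet.univ, Set.preimage_univ]
    exact measure_lt_top μf _
  have hmap : μf.map ψ = μg := by
    apply MeasureTheory.Measure.ext_of_Iic
    intro x
    rw [Measure.map_apply hmeas measurableSet_Iic]
    rcases lt_or_ge x 0 with hx | hx0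
    · have h1 : ψ ⁻¹' (Set.Iic x) ∩ Set.Icc 0 ℓ = (∅ : Set ℝ) := by
        ext t
        simp only [Set.mem_inter_iff, Set.mem_preimage, Set.mem_Iic,
          Set.mem_empty_iff_false, iff_false, not_and]
        intro hψx htm
        exact absurd ((hψ_mem t htm).1.trans hψx) (not_le.mpr hx)
      have h2 : Set.Iic x ∩ Set.Icc 0 ℓ = (∅ : Set ℝ) := by
        apply Set.eq_empty_iff_forall_notMem.mpr
        rintro t ⟨ht1, ht2, ht3⟩
        rw [Set.mem_Iic] at ht1
        linarith
      rw [hrestr _ (hmeas measurableSet_Iic), hrestrg _ measurableSet_Iic, h1, h2]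
      simp
    rcases le_or_gt x ℓ with hxℓ | hxℓ
    · obtain ⟨x', hx'm, hx'⟩ := hFsurj (hGmem x ⟨hx0, hxℓ⟩)
      have h1 : ψ ⁻¹' (Set.Iic x) ∩ Set.Icc 0 ℓ = Set.Icc 0 x' := by
        ext t
        simp only [Set.mem_inter_iff, Set.mem_preimage, Set.mem_Iic, Set.mem_Icc]
        constructor
        · rintro ⟨hψx, ht0, htℓ⟩
          refine ⟨ht0, ?_⟩
          have h3 : G (ψ t) ≤ G x :=
            hGmono.monotoneOn (hψ_mem t ⟨ht0, htℓ⟩) ⟨hx0, hxℓ⟩ hψx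
          rw [hψ_eq t ⟨ht0, htℓ⟩, ← hx'] at h3
          exact (hFmono.le_iff_le ⟨ht0, htℓ⟩ hx'm).mp h3
        · rintro ⟨ht0, htx'⟩
          have htm : t ∈ Set.Icc (0:ℝ) ℓ := ⟨ht0, htx'.trans hx'm.2⟩
          refine ⟨?_, htm.1, htm.2⟩
          have h4 : F t ≤ F x' := (hFmono.le_iff_le htm hx'm).mpr htx'
          have h5 : G (ψ t) ≤ G x := by
            rw [hψ_eq t htm, ← hx'] at *
            exact h4
          exact (hGmono.le_iff_le (hψ_mem t htm) ⟨hx0, hxℓ⟩).mp h5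
      have h2 : Set.Iic x ∩ Set.Icc 0 ℓ = Set.Icc 0 x := by
        ext t
        simp only [Set.mem_inter_iff, Set.mem_Iic, Set.mem_Icc]
        exact ⟨fun ⟨a, b, _⟩ => ⟨b, a⟩, fun ⟨b, a⟩ => ⟨a, b, a.trans hxℓ⟩⟩
      rw [hrestr _ (hmeas measurableSet_Iic), hrestrg _ measurableSet_Iic, h1, h2,
        ← hμf, ← hμg, hμf_Icc hx'm.1 hx'm.2, hμg_Icc hx0 hxℓ]
      exact congrArg ENNReal.ofReal hx'
    · have h1 : ψ ⁻¹' (Set.Iic x) ∩ Set.Icc 0 ℓ = Set.Icc 0 ℓ := by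
        apply Set.inter_eq_right.mpr
        intro t htm
        exact ((hψ_mem t htm).2.trans hxℓ.le : ψ t ≤ x)
      have h2 : Set.Iic x ∩ Set.Icc 0 ℓ = Set.Icc 0 ℓ := by
        apply Set.inter_eq_right.mpr
        intro t htm
        exact (htm.2.trans hxℓ.le : t ≤ x)
      rw [hrestr _ (hmeas measurableSet_Iic), hrestrg _ measurableSet_Iic, h1, h2,
        ← hμf, ← hμg, hμf_Icc hℓ.le le_rfl, hμg_Icc hℓ.le le_rfl, hFℓ, hGℓ]
  exact ⟨ψ, hbij, hψcont.continuousOn, hmap, hdist⟩
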